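/- Let (A,B,C,D) be a linear system with A Hurwitz, and suppose there is a symmetric positive semidefinite matrix G with AᵀG = GA and BᵀG = C (reciprocity with σ = I), and D = Dᵀ is positive semidefinite. Then Q = G satisfies the passivity LMI; i.e., the system is passive with storage function ½xᵀGx. -/

import Mathlib

open Matrix

/-- membership in the real spectrum of a real matrix via determinants. -/
private lemma mem_spectrum_iff_det {k : ℕ} (M : Matrix (Fin k) (Fin k) ℝ) (μ : ℝ) :
    μ ∈ spectrum ℝ M ↔ (μ • (1 : Matrix (Fin k) (Fin k) ℝ) - M).det = 0 := by
  rw [spectrum.mem_iff, Algebra.algebraMap_eq_smul_one, Matrix.isUnit_iff_isUnit_det,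
    isUnit_iff_ne_zero, not_not]

/-- Hurwitz (complex spectrum in open left half plane) implies the real
spectrum is negative. -/
private lemma real_spectrum_neg {k : ℕ} (A : Matrix (Fin k) (Fin k) ℝ)
    (hH : ∀ μ ∈ spectrum ℂ (A.map (fun a => (a : ℂ))), μ.re < 0) :
    ∀ μ ∈ spectrum ℝ A, μ < 0 := by
  intro μ hμ
  rw [mem_spectrum_iff_det] at hμ
  have hdet : ((μ : ℂ) • (1 : Matrix (Fin k) (Fin k) ℂ) - A.map (fun a => (a : ℂ))).det = 0 := by
    have hmap : (μ • (1 : Matrix (Fin k) (Fin k) ℝ) - A).map (fun a => (a : ℂ))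
        = (μ : ℂ) • (1 : Matrix (Fin k) (Fin k) ℂ) - A.map (fun a => (a : ℂ)) := by
      ext i j
      by_cases hij : i = j <;>
        simp [Matrix.map_apply, Matrix.one_apply, hij]
    have := (Complex.ofRealHom).map_det (μ • (1 : Matrix (Fin k) (Fin k) ℝ) - A)
    rw [hμ] at this
    simp only [map_zero] at this
    rw [← hmap, show ((μ • (1 : Matrix (Fin k) (Fin k) ℝ) - A).map fun a => (a : ℂ))
      = Complex.ofRealHom.mapMatrix (μ • 1 - A) from rfl, ← this]
  have hmem : (μ : ℂ) ∈ spectrum ℂ (A.map (fun a => (a : ℂ))) := by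
    rw [spectrum.mem_iff, Algebra.algebraMap_eq_smul_one]
    rw [Matrix.isUnit_iff_isUnit_det, isUnit_iff_ne_zero, not_not]
    exact hdet
  simpa using hH _ hmem

/-- A real symmetric matrix whose real spectrum is nonpositive has `-M` PSD. -/
private lemma neg_posSemidef_of_spectrum_nonpos {k : ℕ} {M : Matrix (Fin k) (Fin k) ℝ}
    (hM : M.IsHermitian) (h : ∀ μ ∈ spectrum ℝ M, μ ≤ 0) : (-M).PosSemidef := by
  have hM' : (-M).IsHermitian := hM.neg
  refine hM'.posSemidef_iff_eigenvalues_nonneg.mpr fun i => show (0 : ℝ) ≤ hM'.eigenvalues i from ?_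
  have hmem := hM'.eigenvalues_mem_spectrum_real i
  have : -hM'.eigenvalues i ∈ spectrum ℝ M := by
    rw [← spectrum.neg_eq] at hmem
    simpa using hmem
  linarith [h _ this]

set_option maxHeartbeats 1000000 in
/-- Key lemma: if `A` is Hurwitz-like (negative real spectrum) and
`Aᵀ D = D A` with `D = diagonal d`, `d ≥ 0`, then `-(D*A)` is PSD. -/
private lemma key_diag {k : ℕ} (A : Matrix (Fin k) (Fin k) ℝ) (d : Fin k → ℝ)
    (hd : ∀ i, 0 ≤ d i) (hrel : Aᵀ * Matrix.diagonal d = Matrix.diagonal d * A)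
    (hspec : ∀ μ ∈ spectrum ℝ A, μ < 0) :
    (-(Matrix.diagonal d * A)).PosSemidef := by
  classical
  have hrelij : ∀ i j, A j i * d j = d i * A i j := by
    intro i j
    have h1 : (Aᵀ * Matrix.diagonal d) i j = (Matrix.diagonal d * A) i j := by rw [hrel]
    simpa [Matrix.mul_diagonal, Matrix.diagonal_mul, Matrix.transpose_apply] using h1
  set r : Fin k → ℝ := fun i => Real.sqrt (d i) with hr
  set p : Fin k → ℝ := fun i => if d i = 0 then 0 else (Real.sqrt (d i))⁻¹ with hp
  have hr0 : ∀ i, d i = 0 → r i = 0 := by intro i hi; simp [hr, hi]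
  have hrpos : ∀ i, d i ≠ 0 → 0 < r i := fun i hi =>
    Real.sqrt_pos.mpr ((hd i).lt_of_ne (Ne.symm hi))
  have hp0 : ∀ i, d i = 0 → p i = 0 := by intro i hi; simp [hp, hi]
  have hpr : ∀ i, d i ≠ 0 → p i * r i = 1 := by
    intro i hi
    simp only [hp, hr, if_neg hi]
    exact inv_mul_cancel₀ (ne_of_gt (hrpos i hi))
  have hrr : ∀ i, r i * r i = d i := fun i => Real.mul_self_sqrt (hd i)
  set R : Matrix (Fin k) (Fin k) ℝ := Matrix.diagonal r with hR
  set Rp : Matrix (Fin k) (Fin k) ℝ := Matrix.diagonal p with hRp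
  set T : Matrix (Fin k) (Fin k) ℝ := R * A * Rp with hT
  have hvan : ∀ i j, d j = 0 → r i * A i j = 0 := by
    intro i j hj
    by_cases hi : d i = 0
    · rw [hr0 i hi, zero_mul]
    · have h0 : d i * A i j = 0 := by rw [← hrelij i j, hj, mul_zero]
      rcases mul_eq_zero.mp h0 with h | h
      · exact absurd h hi
      · rw [h, mul_zero]
  have hTentry : ∀ i j, T i j = r i * A i j * p j := by
    intro i j
    rw [hT, hRp, Matrix.mul_diagonal, hR, Matrix.diagonal_mul]
  -- T * R = R * A
  have hTR : T * R = R * A := by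
    ext i j
    rw [show (T * R) i j = T i j * r j by simp [hR, Matrix.mul_diagonal],
      show (R * A) i j = r i * A i j by simp [hR, Matrix.diagonal_mul], hTentry]
    by_cases hj : d j = 0
    · rw [hp0 j hj, mul_zero, zero_mul, ← hvan i j hj]
    · rw [mul_assoc, hpr j hj, mul_one]
  -- T is symmetric
  have hTsym : T.IsHermitian := by
    rw [Matrix.IsHermitian, Matrix.conjTranspose_eq_transpose_of_trivial]
    ext i j
    rw [Matrix.transpose_apply, hTentry, hTentry]
    by_cases hi : d i = 0
    · rw [hp0 i hi, hr0 i hi, mul_zero, zero_mul, zero_mul]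
    · by_cases hj : d j = 0
      · rw [hp0 j hj, hr0 j hj, mul_zero, zero_mul, zero_mul]
      · have hri := hrpos i hi
        have hrj := hrpos j hj
        have hij : A j i * (r j * r j) = (r i * r i) * A i j := by
          rw [hrr i, hrr j]; exact hrelij i j
        simp only [hp, if_neg hi, if_neg hj]
        rw [show (Real.sqrt (d i))⁻¹ = (r i)⁻¹ from rfl,
          show (Real.sqrt (d j))⁻¹ = (r j)⁻¹ from rfl]
        field_simp
        nlinarith [hij]
  -- D * A = R * T * R
  have hRR : R * R = Matrix.diagonal d := by
    rw [hR, Matrix.diagonal_mul_diagonal]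
    exact congrArg Matrix.diagonal (funext hrr)
  have hDA : Matrix.diagonal d * A = R * T * R := by
    rw [Matrix.mul_assoc, hTR, ← Matrix.mul_assoc, hRR]
  -- all real spectrum of T is nonpositive
  have hTspec : ∀ μ ∈ spectrum ℝ T, μ ≤ 0 := by
    intro μ hμ
    by_contra hcon
    push_neg at hcon
    have hμ0 : μ ≠ 0 := ne_of_gt hcon
    rw [mem_spectrum_iff_det] at hμ
    obtain ⟨u, hu0, huv⟩ := (Matrix.exists_mulVec_eq_zero_iff).mpr hμ
    have hTu : T *ᵥ u = μ • u := by
      rw [Matrix.sub_mulVec, Matrix.smul_mulVec, Matrix.one_mulVec, sub_eq_zero] at huv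
      exact huv.symm
    set z : Fin k → ℝ := μ⁻¹ • (A *ᵥ (Rp *ᵥ u)) with hz
    have hRz : R *ᵥ z = u := by
      rw [hz, Matrix.mulVec_smul, Matrix.mulVec_mulVec, Matrix.mulVec_mulVec, ← hT, hTu,
        smul_smul, inv_mul_cancel₀ hμ0, one_smul]
    have hKA : ∀ x : Fin k → ℝ, R *ᵥ x = 0 → R *ᵥ (A *ᵥ x) = 0 := by
      intro x hx
      rw [Matrix.mulVec_mulVec, ← hTR, ← Matrix.mulVec_mulVec, hx, Matrix.mulVec_zero]
    have hMunit : IsUnit (μ • (1 : Matrix (Fin k) (Fin k) ℝ) - A) := by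
      by_contra hcon2
      have : μ ∈ spectrum ℝ A := by
        rw [spectrum.mem_iff, Algebra.algebraMap_eq_smul_one]
        exact hcon2
      linarith [hspec μ this]
    set M : Matrix (Fin k) (Fin k) ℝ := μ • (1 : Matrix (Fin k) (Fin k) ℝ) - A with hM
    have hinj : Function.Injective M.mulVec := Matrix.mulVec_injective_iff_isUnit.mpr hMunit
    set K : Submodule ℝ (Fin k → ℝ) := LinearMap.ker R.mulVecLin with hK
    have hmemK : ∀ x : Fin k → ℝ, x ∈ K ↔ R *ᵥ x = 0 := by
      intro x
      rw [hK, LinearMap.mem_ker, Matrix.mulVecLin_apply]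
    have hKM : ∀ x ∈ K, M.mulVecLin x ∈ K := by
      intro x hx
      rw [hmemK] at hx
      rw [hmemK, Matrix.mulVecLin_apply, hM, Matrix.sub_mulVec, Matrix.smul_mulVec,
        Matrix.one_mulVec, Matrix.mulVec_sub, Matrix.mulVec_smul, hx, hKA x hx,
        smul_zero, sub_zero]
    set φ : K →ₗ[ℝ] K := (M.mulVecLin).restrict hKM with hφ
    have hφinj : Function.Injective φ := by
      intro a b hab
      apply Subtype.ext
      apply hinj
      have h1 := congrArg Subtype.val hab
      rw [hφ, LinearMap.restrict_coe_apply, LinearMap.restrict_coe_apply,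
        Matrix.mulVecLin_apply, Matrix.mulVecLin_apply] at h1
      exact h1
    have hφsurj : Function.Surjective φ :=
      (LinearMap.injective_iff_surjective).mp hφinj
    have hMz : M.mulVecLin z ∈ K := by
      rw [hmemK, Matrix.mulVecLin_apply, hM, Matrix.sub_mulVec, Matrix.smul_mulVec,
        Matrix.one_mulVec, Matrix.mulVec_sub, Matrix.mulVec_smul, hRz]
      have h2 : R *ᵥ (A *ᵥ z) = μ • u := by
        rw [Matrix.mulVec_mulVec, ← hTR, ← Matrix.mulVec_mulVec, hRz, hTu]
      rw [h2, sub_self]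
    obtain ⟨x, hx⟩ := hφsurj ⟨M.mulVecLin z, hMz⟩
    have hxz : (x : Fin k → ℝ) = z := by
      apply hinj
      have h1 := congrArg Subtype.val hx
      rw [hφ, LinearMap.restrict_coe_apply, Matrix.mulVecLin_apply] at h1
      exact h1.trans (Matrix.mulVecLin_apply M z)
    have hzK : z ∈ K := hxz ▸ x.2
    rw [hmemK, hRz] at hzK
    exact hu0 hzK
  have hnT : (-T).PosSemidef := neg_posSemidef_of_spectrum_nonpos hTsym hTspec
  have hRH : Rᴴ = R := by
    rw [Matrix.conjTranspose_eq_transpose_of_trivial, hR, Matrix.diagonal_transpose]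
  have hfin := hnT.mul_mul_conjTranspose_same R
  rw [hRH] at hfin
  have hfin2 : R * -T * R = -(Matrix.diagonal d * A) := by
    rw [hDA]
    noncomm_ring
  rwa [hfin2] at hfin

/-- A block diagonal matrix with PSD blocks is PSD. -/
private lemma posSemidef_fromBlocks_diag {a b : ℕ} {P : Matrix (Fin a) (Fin a) ℝ}
    {Q : Matrix (Fin b) (Fin b) ℝ} (hP : P.PosSemidef) (hQ : Q.PosSemidef) :
    (Matrix.fromBlocks P 0 0 Q).PosSemidef := by
  refine Matrix.PosSemidef.of_dotProduct_mulVec_nonneg ?_ ?_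
  · rw [Matrix.IsHermitian, Matrix.fromBlocks_conjTranspose, hP.1, hQ.1]
    simp
  · intro x
    have hsx : star x = x := funext fun i => star_trivial _
    rw [hsx, Matrix.fromBlocks_mulVec]
    simp only [Matrix.zero_mulVec, add_zero, zero_add]
    rw [Matrix.dotProduct_block]
    simp only [Sum.elim_comp_inl, Sum.elim_comp_inr]
    have h1 := hP.dotProduct_mulVec_nonneg (x ∘ Sum.inl)
    have h2 := hQ.dotProduct_mulVec_nonneg (x ∘ Sum.inr)
    rw [show star (x ∘ Sum.inl) = x ∘ Sum.inl from funext fun i => star_trivial _] at h1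
    rw [show star (x ∘ Sum.inr) = x ∘ Sum.inr from funext fun i => star_trivial _] at h2
    exact add_nonneg h1 h2

theorem reciprocal_hurwitz_passive {n m : ℕ}
    (A : Matrix (Fin n) (Fin n) ℝ) (B : Matrix (Fin n) (Fin m) ℝ)
    (C : Matrix (Fin m) (Fin n) ℝ) (D : Matrix (Fin m) (Fin m) ℝ)
    (hHurwitz : ∀ μ ∈ spectrum ℂ (A.map (fun a => (a : ℂ))), μ.re < 0)
    (G : Matrix (Fin n) (Fin n) ℝ) (hG : G.PosSemidef)
    (hrec1 : Aᵀ * G = G * A) (hrec2 : Bᵀ * G = C)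
    (hDsym : Dᵀ = D) (hDpos : D.PosSemidef) :
    (Matrix.fromBlocks (-(Aᵀ * G) - G * A) (Cᵀ - G * B)
      (C - Bᵀ * G) (D + Dᵀ)).PosSemidef := by
  classical
  have hGH : G.IsHermitian := hG.1
  set d : Fin n → ℝ := hGH.eigenvalues with hdd
  have hd : ∀ i, 0 ≤ d i := fun i => hG.eigenvalues_nonneg i
  set V : Matrix (Fin n) (Fin n) ℝ := (hGH.eigenvectorUnitary : Matrix (Fin n) (Fin n) ℝ)
    with hVd
  have hV1 : star V * V = 1 := Matrix.UnitaryGroup.star_mul_self _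
  have hV2 : V * star V = 1 := by
    have := Matrix.UnitaryGroup.star_mul_self hGH.eigenvectorUnitary
    exact mul_eq_one_comm.mp this
  have spec : G = V * Matrix.diagonal d * star V := by
    have h := hGH.spectral_theorem
    simpa [RCLike.ofReal_real_eq_id] using h
  set A' : Matrix (Fin n) (Fin n) ℝ := star V * A * V with hA'
  have hsV : star V = Vᵀ := by
    rw [Matrix.star_eq_conjTranspose, Matrix.conjTranspose_eq_transpose_of_trivial]
  have hA'T : A'ᵀ = star V * Aᵀ * V := by
    rw [hA', Matrix.transpose_mul, Matrix.transpose_mul, hsV, Matrix.transpose_transpose,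
      Matrix.mul_assoc]
  have hrel' : A'ᵀ * Matrix.diagonal d = Matrix.diagonal d * A' := by
    have h := hrec1
    rw [spec] at h
    calc A'ᵀ * Matrix.diagonal d
        = star V * Aᵀ * V * Matrix.diagonal d * (star V * V) := by
          rw [hV1, Matrix.mul_one, hA'T]
      _ = star V * (Aᵀ * (V * Matrix.diagonal d * star V)) * V := by
          simp only [Matrix.mul_assoc]
      _ = star V * ((V * Matrix.diagonal d * star V) * A) * V := by rw [h]
      _ = (star V * V) * Matrix.diagonal d * (star V * A * V) := by
          simp only [Matrix.mul_assoc]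
      _ = Matrix.diagonal d * A' := by rw [hV1, Matrix.one_mul, hA']
  have hspec' : ∀ μ ∈ spectrum ℝ A', μ < 0 := by
    intro μ hμ
    rw [mem_spectrum_iff_det] at hμ
    have hkeyq : μ • (1 : Matrix (Fin n) (Fin n) ℝ) - A'
        = star V * (μ • (1 : Matrix (Fin n) (Fin n) ℝ) - A) * V := by
      rw [Matrix.mul_sub, Matrix.sub_mul, hA']
      congr 1
      rw [Matrix.mul_smul, Matrix.mul_one, Matrix.smul_mul, hV1]
    have hVdet : (star V).det * V.det = 1 := by
      rw [← Matrix.det_mul, hV1, Matrix.det_one]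
    have hdetV : V.det ≠ 0 := by
      intro h0; rw [h0, mul_zero] at hVdet; exact zero_ne_one hVdet
    have hdetVs : (star V).det ≠ 0 := by
      intro h0; rw [h0, zero_mul] at hVdet; exact zero_ne_one hVdet
    have hdetA : (μ • (1 : Matrix (Fin n) (Fin n) ℝ) - A).det = 0 := by
      rw [hkeyq, Matrix.det_mul, Matrix.det_mul] at hμ
      rcases mul_eq_zero.mp hμ with h | h
      · rcases mul_eq_zero.mp h with h' | h'
        · exact absurd h' hdetVs
        · exact h'
      · exact absurd h hdetV
    have : μ ∈ spectrum ℝ A := (mem_spectrum_iff_det A μ).mpr hdetA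
    exact real_spectrum_neg A hHurwitz μ this
  have hkey := key_diag A' d hd hrel' hspec'
  have h4 := hkey.mul_mul_conjTranspose_same V
  rw [← Matrix.star_eq_conjTranspose] at h4
  have h5 : V * -(Matrix.diagonal d * A') * star V = -(G * A) := by
    rw [spec, hA', Matrix.mul_neg, Matrix.neg_mul]
    congr 1
    calc V * (Matrix.diagonal d * (star V * A * V)) * star V
        = V * Matrix.diagonal d * star V * A * (V * star V) := by
          simp only [Matrix.mul_assoc]
      _ = V * Matrix.diagonal d * star V * A := by rw [hV2, Matrix.mul_one]
  rw [h5] at h4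
  -- assemble blocks
  have hGsym : Gᵀ = G := by
    rw [← Matrix.conjTranspose_eq_transpose_of_trivial]; exact hGH
  have hCB : Cᵀ - G * B = 0 := by
    rw [← hrec2, Matrix.transpose_mul, Matrix.transpose_transpose, hGsym, sub_self]
  have hBC : C - Bᵀ * G = 0 := by rw [← hrec2, sub_self]
  have htop : -(Aᵀ * G) - G * A = -(G * A) + -(G * A) := by
    rw [hrec1, sub_eq_add_neg]
  rw [hCB, hBC, htop, hDsym]
  exact posSemidef_fromBlocks_diag (h4.add h4) (hDpos.add hDpos)
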